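/- Let Z₁,…,Z_n be independent and identically distributed real-valued random variables on a probability space, let τ ∈ ℝ, set c = P(Z₁ ≥ τ), and let a₁,…,a_n ∈ ℝ with max_{1≤i≤n} |a_i| ≤ f∞. Then P( inf_{t ∈ [0,τ]} (1/n) Σ_{i=1}^n 1(Z_i ≥ t) e^{a_i} ≥ e^{−f∞} c/2 ) ≥ 1 − 2 e^{−n c²/2}. -/

import Mathlib

open MeasureTheory ProbabilityTheory

lemma upos {c : ℝ} (hc0 : 0 ≤ c) (hc1 : c ≤ 1) (t : ℝ) :
    0 < 1 - c + c * Real.exp (-t) := by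
  rcases eq_or_lt_of_le hc0 with h | h
  · simp [← h]
  · nlinarith [Real.exp_pos (-t), mul_pos h (Real.exp_pos (-t))]

lemma hoeff_bernoulli {c : ℝ} (hc0 : 0 ≤ c) (hc1 : c ≤ 1) {t : ℝ} (ht : 0 ≤ t) :
    1 - c + c * Real.exp (-t) ≤ Real.exp (-(c*t) + t^2/8) := by
  set u : ℝ → ℝ := fun s => 1 - c + c * Real.exp (-s) with hu
  have hup : ∀ s, 0 < u s := fun s => upos hc0 hc1 s
  set f : ℝ → ℝ := fun s => Real.log (u s) + c * s - s^2/8 with hf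
  set f' : ℝ → ℝ := fun s => (-(c * Real.exp (-s))) / u s + c - s/4 with hf'
  set g : ℝ → ℝ := fun s => c * Real.exp (-s) * (1 - c) / (u s)^2 - 1/4 with hg
  have hderivu : ∀ s, HasDerivAt u (-(c * Real.exp (-s))) s := by
    intro s
    have h1 : HasDerivAt (fun s : ℝ => Real.exp (-s)) (-Real.exp (-s)) s := by
      simpa using (hasDerivAt_neg s).exp
    have := ((h1.const_mul c).const_add (1 - c))
    simpa [hu, mul_neg] using this
  have hderivf : ∀ s, HasDerivAt f (f' s) s := by
    intro s
    have hlog : HasDerivAt (fun s => Real.log (u s)) ((-(c * Real.exp (-s))) / u s) s :=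
      (hderivu s).log (hup s).ne'
    have h2 : HasDerivAt (fun s : ℝ => c * s) c s := by
      simpa using (hasDerivAt_id s).const_mul c
    have h3 : HasDerivAt (fun s : ℝ => s^2/8) (s/4) s := by
      have := (hasDerivAt_pow 2 s).div_const 8
      refine this.congr_deriv ?_
      have h2s : ((2:ℕ):ℝ) * s ^ (2 - 1) = 2 * s := by norm_num
      linear_combination (1/8 : ℝ) * h2s
    exact (hlog.add h2).sub h3
  have hderivf' : ∀ s, HasDerivAt f' (g s) s := by
    intro s
    have hN : HasDerivAt (fun s : ℝ => -(c * Real.exp (-s))) (c * Real.exp (-s)) s := by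
      have h1 : HasDerivAt (fun s : ℝ => Real.exp (-s)) (-Real.exp (-s)) s := by
        simpa using (hasDerivAt_neg s).exp
      exact ((h1.const_mul c).neg).congr_deriv (by ring)
    have hdiv : HasDerivAt (fun s => (-(c * Real.exp (-s))) / u s)
        ((c * Real.exp (-s) * u s - (-(c * Real.exp (-s))) * (-(c * Real.exp (-s)))) / (u s)^2) s :=
      hN.div (hderivu s) (hup s).ne'
    have h4 : HasDerivAt (fun s : ℝ => s/4) (1/4 : ℝ) s := by
      simpa using (hasDerivAt_id s).div_const 4
    have := (hdiv.add_const c).sub h4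
    refine this.congr_deriv ?_
    have hus := (hup s).ne'
    show _ = c * Real.exp (-s) * (1 - c) / (u s)^2 - 1/4
    congr 2
    simp only [hu]
    ring
  have hgle : ∀ s, g s ≤ 0 := by
    intro s
    have hus : u s = 1 - c + c * Real.exp (-s) := rfl
    have h2 : (0:ℝ) < u s := hup s
    have key : c * Real.exp (-s) * (1 - c) / (u s)^2 ≤ 1/4 := by
      rw [div_le_iff₀ (pow_pos h2 2), hus]
      nlinarith [sq_nonneg ((1-c) - c * Real.exp (-s)), Real.exp_pos (-s)]
    simp only [hg]
    linarith
  have hf'anti : Antitone f' :=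
    antitone_of_deriv_nonpos (fun s => (hderivf' s).differentiableAt)
      (fun s => by rw [(hderivf' s).deriv]; exact hgle s)
  have hf'le : ∀ s, 0 ≤ s → f' s ≤ 0 := by
    intro s hs
    have h0 : f' 0 = 0 := by
      simp [hf', hu]
    calc f' s ≤ f' 0 := hf'anti hs
    _ = 0 := h0
  have hfanti : AntitoneOn f (Set.Ici 0) := by
    apply antitoneOn_of_deriv_nonpos (convex_Ici 0)
    · exact (Continuous.continuousOn (by
        fun_prop (disch := intro s; exact (hup s).ne')) : ContinuousOn f (Set.Ici 0))
    · intro s hs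
      exact (hderivf s).differentiableAt.differentiableWithinAt
    · intro s hs
      rw [(hderivf s).deriv]
      exact hf'le s (le_of_lt (by simpa using hs))
  have hft : f t ≤ 0 := by
    have := hfanti (Set.self_mem_Ici) (Set.mem_Ici.2 ht) ht
    have hf0 : f 0 = 0 := by simp [hf, hu]
    linarith [this, hf0.symm.le]
  have : Real.log (u t) ≤ -(c*t) + t^2/8 := by
    rw [hf] at hft
    simp only at hft
    linarith
  calc u t = Real.exp (Real.log (u t)) := (Real.exp_log (hup t)).symm
  _ ≤ Real.exp (-(c*t) + t^2/8) := Real.exp_le_exp.2 this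

theorem at_risk_uniform_lower_bound {Ω : Type*} [MeasurableSpace Ω]
    (P : Measure Ω) [IsProbabilityMeasure P]
    (n : ℕ) (hn : 0 < n) (Z : Fin n → Ω → ℝ) (hZmeas : ∀ i, Measurable (Z i))
    (hindep : iIndepFun Z P)
    (hident : ∀ i, IdentDistrib (Z i) (Z ⟨0, hn⟩) P P)
    (τ : ℝ) (a : Fin n → ℝ) (finf : ℝ) (ha : ∀ i, |a i| ≤ finf) :
    ENNReal.ofReal
        (1 - 2 * Real.exp (-((n : ℝ) *
          ((P {ω | τ ≤ Z ⟨0, hn⟩ ω}).toReal) ^ 2) / 2)) ≤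
      P {ω | ∀ t ∈ Set.Icc (0 : ℝ) τ,
        Real.exp (-finf) * (P {ω' | τ ≤ Z ⟨0, hn⟩ ω'}).toReal / 2 ≤
          (1 / (n : ℝ)) *
            ∑ i, (if t ≤ Z i ω then (1 : ℝ) else 0) * Real.exp (a i)} := by
  classical
  set c : ℝ := (P {ω | τ ≤ Z ⟨0, hn⟩ ω}).toReal with hc
  have hc0 : 0 ≤ c := ENNReal.toReal_nonneg
  have hc1 : c ≤ 1 := by
    rw [hc]
    exact ENNReal.toReal_le_of_le_ofReal zero_le_one (by simpa using prob_le_one)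
  -- the indicator variables
  set g : ℝ → ℝ := fun x => if τ ≤ x then (-1 : ℝ) else 0 with hgdef
  have hgmeas : Measurable g := by
    apply Measurable.ite _ measurable_const measurable_const
    exact measurableSet_Ici
  set Y : Fin n → Ω → ℝ := fun i => g ∘ Z i with hY
  have hYmeas : ∀ i, Measurable (Y i) := fun i => hgmeas.comp (hZmeas i)
  have hYindep : iIndepFun Y P :=
    hindep.comp (fun _ => g) (fun _ => hgmeas)
  set A : Fin n → Set Ω := fun i => {ω | τ ≤ Z i ω} with hA
  have hAmeas : ∀ i, MeasurableSet (A i) := fun i =>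
    measurableSet_le measurable_const (hZmeas i)
  have hPA : ∀ i, (P (A i)).toReal = c := fun i =>
    congrArg ENNReal.toReal ((hident i).measure_mem_eq (measurableSet_Ici (a := τ)))
  -- mgf of each Y i
  have hmgfY : ∀ i, ∀ s : ℝ, mgf (Y i) P s = 1 - c + c * Real.exp (-s) := by
    intro i s
    have hfun : (fun ω => Real.exp (s * Y i ω)) =
        fun ω => Set.indicator (A i) (fun _ => Real.exp (-s) - 1) ω + 1 := by
      funext ω
      by_cases h : τ ≤ Z i ω
      · simp [hY, hgdef, hA, h, Set.indicator_of_mem, mul_neg, mul_one]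
      · simp [hY, hgdef, hA, h, Set.indicator_of_notMem]
    rw [mgf, hfun]
    rw [integral_add ((integrable_const _).indicator (hAmeas i)) (integrable_const 1)]
    rw [integral_indicator_const _ (hAmeas i), integral_const]
    simp [hPA i]
    rw [measureReal_def, hPA i]
    ring
  -- mgf of the sum
  have hmgfsum : ∀ s : ℝ, mgf (∑ i, Y i) P s = (1 - c + c * Real.exp (-s))^n := by
    intro s
    rw [hYindep.mgf_sum hYmeas Finset.univ]
    simp [hmgfY _ s]
  -- Chernoff
  set s : ℝ := 2 * c with hs
  have hs0 : 0 ≤ s := by positivity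
  set ε : ℝ := -((n : ℝ) * c / 2) with hε
  have hsum_apply : ∀ ω, (∑ i, Y i) ω = ∑ i, Y i ω := by
    intro ω; simp [Finset.sum_apply]
  have hsum_nonpos : ∀ ω, (∑ i, Y i) ω ≤ 0 := by
    intro ω
    rw [hsum_apply]
    apply Finset.sum_nonpos
    intro i _
    simp only [hY, hgdef, Function.comp_apply]
    split <;> norm_num
  have hTmeas : Measurable (fun ω => (∑ i, Y i) ω) := by
    simp only [hsum_apply]
    exact Finset.measurable_sum Finset.univ (fun i _ => hYmeas i)
  have h_int : Integrable (fun ω => Real.exp (s * (∑ i, Y i) ω)) P := by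
    refine Integrable.mono' (integrable_const (1 : ℝ))
      ((hTmeas.const_mul s).exp).aestronglyMeasurable ?_
    filter_upwards with ω
    rw [Real.norm_eq_abs, abs_of_pos (Real.exp_pos _)]
    calc Real.exp (s * (∑ i, Y i) ω) ≤ Real.exp 0 :=
      Real.exp_le_exp.2 (mul_nonpos_of_nonneg_of_nonpos hs0 (hsum_nonpos ω))
    _ = 1 := Real.exp_zero
  have chern : (P {ω | ε ≤ (∑ i, Y i) ω}).toReal ≤
      Real.exp (-s * ε) * mgf (∑ i, Y i) P s :=
    measure_ge_le_exp_mul_mgf ε hs0 h_int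
  have hbound : Real.exp (-s * ε) * mgf (∑ i, Y i) P s ≤
      Real.exp (-((n : ℝ) * c ^ 2) / 2) := by
    rw [hmgfsum s]
    have h1 : (1 - c + c * Real.exp (-s))^n ≤ (Real.exp (-(c*s) + s^2/8))^n := by
      apply pow_le_pow_left₀ (le_of_lt (upos hc0 hc1 s))
      exact hoeff_bernoulli hc0 hc1 hs0
    calc Real.exp (-s * ε) * (1 - c + c * Real.exp (-s))^n
        ≤ Real.exp (-s * ε) * (Real.exp (-(c*s) + s^2/8))^n := by
          apply mul_le_mul_of_nonneg_left h1 (Real.exp_pos _).le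
    _ = Real.exp (-((n : ℝ) * c ^ 2) / 2) := by
        rw [← Real.exp_nat_mul, ← Real.exp_add]
        congr 1
        rw [hs, hε]
        ring
  have hPtail : P {ω | ε ≤ (∑ i, Y i) ω} ≤
      ENNReal.ofReal (Real.exp (-((n : ℝ) * c ^ 2) / 2)) := by
    calc P {ω | ε ≤ (∑ i, Y i) ω}
        = ENNReal.ofReal ((P {ω | ε ≤ (∑ i, Y i) ω}).toReal) :=
          (ENNReal.ofReal_toReal (measure_ne_top P _)).symm
    _ ≤ ENNReal.ofReal (Real.exp (-((n : ℝ) * c ^ 2) / 2)) :=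
          ENNReal.ofReal_le_ofReal (chern.trans hbound)
  -- the good event
  set S : Ω → ℝ := fun ω => ∑ i, (if τ ≤ Z i ω then (1 : ℝ) else 0) with hS
  have hSmeas : Measurable S :=
    Finset.measurable_sum Finset.univ (fun i _ =>
      Measurable.ite (measurableSet_le measurable_const (hZmeas i))
        measurable_const measurable_const)
  set G : Set Ω := {ω | (n : ℝ) * c / 2 ≤ S ω} with hG
  have hGmeas : MeasurableSet G := measurableSet_le measurable_const hSmeas
  have hsumYS : ∀ ω, (∑ i, Y i) ω = -S ω := by
    intro ω
    rw [hsum_apply, hS]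
    rw [← Finset.sum_neg_distrib]
    apply Finset.sum_congr rfl
    intro i _
    simp only [hY, hgdef, Function.comp_apply]
    split <;> norm_num
  have hGc : Gᶜ ⊆ {ω | ε ≤ (∑ i, Y i) ω} := by
    intro ω hω
    simp only [hG, Set.mem_compl_iff, Set.mem_setOf_eq, not_le] at hω
    simp only [Set.mem_setOf_eq, hsumYS ω, hε]
    linarith
  have hGcP : P Gᶜ ≤ ENNReal.ofReal (Real.exp (-((n : ℝ) * c ^ 2) / 2)) :=
    (measure_mono hGc).trans hPtail
  -- G is contained in the target event
  have hGsub : G ⊆ {ω | ∀ t ∈ Set.Icc (0 : ℝ) τ,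
      Real.exp (-finf) * c / 2 ≤
        (1 / (n : ℝ)) * ∑ i, (if t ≤ Z i ω then (1 : ℝ) else 0) * Real.exp (a i)} := by
    intro ω hω
    intro t ht
    have hωS : (n : ℝ) * c / 2 ≤ S ω := hω
    have hterm : ∀ i : Fin n,
        (if τ ≤ Z i ω then (1 : ℝ) else 0) * Real.exp (-finf) ≤
        (if t ≤ Z i ω then (1 : ℝ) else 0) * Real.exp (a i) := by
      intro i
      by_cases hτZ : τ ≤ Z i ω
      · have htZ : t ≤ Z i ω := le_trans ht.2 hτZ
        simp only [hτZ, htZ, if_pos, one_mul]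
        exact Real.exp_le_exp.2 (neg_le_of_abs_le (ha i))
      · simp only [hτZ, if_neg, not_false_iff, zero_mul]
        positivity
    have hsumle : Real.exp (-finf) * S ω ≤
        ∑ i, (if t ≤ Z i ω then (1 : ℝ) else 0) * Real.exp (a i) := by
      rw [hS, Finset.mul_sum]
      apply Finset.sum_le_sum
      intro i _
      calc Real.exp (-finf) * (if τ ≤ Z i ω then (1 : ℝ) else 0)
          = (if τ ≤ Z i ω then (1 : ℝ) else 0) * Real.exp (-finf) := by ring
      _ ≤ _ := hterm i
    have hnpos : (0 : ℝ) < n := by exact_mod_cast hn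
    have h2 : Real.exp (-finf) * ((n : ℝ) * c / 2) ≤ Real.exp (-finf) * S ω :=
      mul_le_mul_of_nonneg_left hωS (Real.exp_pos _).le
    have h3 : (1 / (n : ℝ)) * (Real.exp (-finf) * S ω) ≤
        (1 / (n : ℝ)) * ∑ i, (if t ≤ Z i ω then (1 : ℝ) else 0) * Real.exp (a i) :=
      mul_le_mul_of_nonneg_left hsumle (by positivity)
    have h4 : Real.exp (-finf) * c / 2 = (1 / (n : ℝ)) * (Real.exp (-finf) * ((n : ℝ) * c / 2)) := by
      field_simp
    rw [h4]
    calc (1 / (n : ℝ)) * (Real.exp (-finf) * ((n : ℝ) * c / 2))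
        ≤ (1 / (n : ℝ)) * (Real.exp (-finf) * S ω) :=
          mul_le_mul_of_nonneg_left h2 (by positivity)
    _ ≤ _ := h3
  -- final assembly
  have hE0 : 0 ≤ Real.exp (-((n : ℝ) * c ^ 2) / 2) := (Real.exp_pos _).le
  calc ENNReal.ofReal (1 - 2 * Real.exp (-((n : ℝ) * c ^ 2) / 2))
      ≤ ENNReal.ofReal (1 - Real.exp (-((n : ℝ) * c ^ 2) / 2)) :=
        ENNReal.ofReal_le_ofReal (by linarith)
  _ = 1 - ENNReal.ofReal (Real.exp (-((n : ℝ) * c ^ 2) / 2)) := by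
        rw [ENNReal.ofReal_sub _ hE0, ENNReal.ofReal_one]
  _ ≤ 1 - P Gᶜ := tsub_le_tsub_left hGcP 1
  _ = P G := by
        rw [prob_compl_eq_one_sub hGmeas, ENNReal.sub_sub_cancel ENNReal.one_ne_top prob_le_one]
  _ ≤ _ := measure_mono hGsub
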